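/- Define ζ = (Z/2)^{1/3} for Z > 0 and let P(Z) = (3ζ² - 1)/(3ζ) = (3(Z/2)^{2/3} - 1)/(3(Z/2)^{1/3}). Then, on the region Z > 0 where P ≠ 0, P satisfies P'' = (P')²/P - P'/Z + (2P² + 2)/Z - 1/P, i.e. P is a solution of the b = 2 similarity ODE with parameter a = 2. -/

import Mathlib

private lemma chs_hd (p : ℝ) {x : ℝ} (hx : 0 < x) :
    HasDerivAt (fun z : ℝ => (z / 2) ^ p) (p * (x / 2) ^ (p - 1) / 2) x := by
  have h0 : (x / 2 : ℝ) ≠ 0 := by positivity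
  have h := Real.hasDerivAt_rpow_const (x := x / 2) (p := p) (Or.inl h0)
  have h2 : HasDerivAt (fun z : ℝ => z / 2) (1 / 2) x := (hasDerivAt_id x).div_const 2
  have h3 := h.comp x h2
  exact h3.congr_deriv (by ring)

private lemma chs_pow3 {x : ℝ} (hx : 0 < x) (n : ℕ) :
    (x / 2) ^ ((n : ℝ) / 3) = ((x / 2) ^ ((1 : ℝ) / 3)) ^ n := by
  rw [← Real.rpow_natCast ((x / 2) ^ ((1 : ℝ) / 3)) n,
    ← Real.rpow_mul (by positivity : (0:ℝ) ≤ x / 2)]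
  congr 1
  ring

private lemma chs_pow3n {x : ℝ} (hx : 0 < x) (n : ℕ) :
    (x / 2) ^ (-((n : ℝ) / 3)) = (((x / 2) ^ ((1 : ℝ) / 3)) ^ n)⁻¹ := by
  rw [Real.rpow_neg (by positivity : (0:ℝ) ≤ x / 2), chs_pow3 hx n]

/-- `P(Z) = (3(Z/2)^{2/3} - 1)/(3(Z/2)^{1/3})` solves the `b = 2` similarity ODE
with parameter `a = 2`, on the region `Z > 0` where `P ≠ 0`. -/
theorem camassa_holm_a2_solution
    (P : ℝ → ℝ)
    (hP : ∀ Z : ℝ, P Z = (3 * (Z / 2) ^ ((2 : ℝ) / 3) - 1)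
      / (3 * (Z / 2) ^ ((1 : ℝ) / 3))) :
    ∀ Z : ℝ, 0 < Z → P Z ≠ 0 →
      deriv (deriv P) Z =
        (deriv P Z) ^ 2 / P Z - deriv P Z / Z
          + (2 * (P Z) ^ 2 + 2) / Z - 1 / P Z := by
  intro Z hZ hPne
  set Q : ℝ → ℝ := fun x => (x / 2) ^ ((1 : ℝ) / 3) - (1/3) * (x / 2) ^ (-((1 : ℝ) / 3)) with hQ
  set Q1 : ℝ → ℝ := fun x =>
    (1/6) * (x / 2) ^ (-((2 : ℝ) / 3)) + (1/18) * (x / 2) ^ (-((4 : ℝ) / 3)) with hQ1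
  -- P = Q on positives
  have hPQ : ∀ x : ℝ, 0 < x → P x = Q x := by
    intro x hx
    have ha : (0:ℝ) < (x / 2) ^ ((1 : ℝ) / 3) := Real.rpow_pos_of_pos (by positivity) _
    have h2 : (x / 2) ^ ((2 : ℝ) / 3) = ((x / 2) ^ ((1 : ℝ) / 3)) ^ 2 := by
      have := chs_pow3 hx 2; norm_num at this; exact this
    have hm : (x / 2) ^ (-((1 : ℝ) / 3)) = (((x / 2) ^ ((1 : ℝ) / 3)) ^ 1)⁻¹ := by
      have := chs_pow3n hx 1; norm_num at this ⊢; exact this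
    simp only [hQ]
    rw [hP x, h2, hm]
    field_simp
  -- Q has derivative Q1 on positives
  have hQd : ∀ x : ℝ, 0 < x → HasDerivAt Q (Q1 x) x := by
    intro x hx
    have h1 := chs_hd ((1:ℝ)/3) hx
    have h2 := ((chs_hd (-((1:ℝ)/3)) hx).const_mul (1/3 : ℝ))
    have h3 := h1.sub h2
    exact h3.congr_deriv (by symm; norm_num; ring)
  -- deriv P = Q1 on positives
  have hdP : ∀ x : ℝ, 0 < x → deriv P x = Q1 x := by
    intro x hx
    have hev : P =ᶠ[nhds x] Q := by
      filter_upwards [eventually_gt_nhds hx] with y hy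
      exact hPQ y hy
    exact ((hQd x hx).congr_of_eventuallyEq hev).deriv
  -- second derivative
  have hQ1d : HasDerivAt Q1 (-(1/18) * (Z / 2) ^ (-((5 : ℝ) / 3))
      - (1/27) * (Z / 2) ^ (-((7 : ℝ) / 3))) Z := by
    have h1 := (chs_hd (-((2:ℝ)/3)) hZ).const_mul (1/6 : ℝ)
    have h2 := (chs_hd (-((4:ℝ)/3)) hZ).const_mul (1/18 : ℝ)
    have h3 := h1.add h2
    exact h3.congr_deriv (by symm; norm_num; ring)
  have hddP : deriv (deriv P) Z = -(1/18) * (Z / 2) ^ (-((5 : ℝ) / 3))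
      - (1/27) * (Z / 2) ^ (-((7 : ℝ) / 3)) := by
    have hev : deriv P =ᶠ[nhds Z] Q1 := by
      filter_upwards [eventually_gt_nhds hZ] with y hy
      exact hdP y hy
    exact (hQ1d.congr_of_eventuallyEq hev).deriv
  -- algebra
  set a : ℝ := (Z / 2) ^ ((1 : ℝ) / 3) with haa
  have ha : 0 < a := Real.rpow_pos_of_pos (by positivity) _
  have ha3 : a ^ 3 = Z / 2 := by
    rw [haa, ← Real.rpow_natCast ((Z / 2) ^ ((1 : ℝ) / 3)) 3,
      ← Real.rpow_mul (by positivity : (0:ℝ) ≤ Z / 2)]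
    norm_num
  have e2 : (Z / 2) ^ ((2 : ℝ) / 3) = a ^ 2 := by
    have := chs_pow3 hZ 2; norm_num at this; exact this
  have e5 : (Z / 2) ^ (-((5 : ℝ) / 3)) = (a ^ 5)⁻¹ := by
    have := chs_pow3n hZ 5; norm_num at this; exact this
  have e7 : (Z / 2) ^ (-((7 : ℝ) / 3)) = (a ^ 7)⁻¹ := by
    have := chs_pow3n hZ 7; norm_num at this; exact this
  have em2 : (Z / 2) ^ (-((2 : ℝ) / 3)) = (a ^ 2)⁻¹ := by
    have := chs_pow3n hZ 2; norm_num at this; exact this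
  have em4 : (Z / 2) ^ (-((4 : ℝ) / 3)) = (a ^ 4)⁻¹ := by
    have := chs_pow3n hZ 4; norm_num at this; exact this
  have hPZ : P Z = (3 * a ^ 2 - 1) / (3 * a) := by rw [hP Z, e2]
  have hnum : 3 * a ^ 2 - 1 ≠ 0 := by
    intro h
    apply hPne
    rw [hPZ, h, zero_div]
  have hZeq : Z = 2 * a ^ 3 := by rw [ha3]; ring
  rw [hddP, hdP Z hZ]
  simp only [hQ1]
  rw [hPZ, e5, e7, em2, em4, hZeq]
  have ha' : a ≠ 0 := ne_of_gt ha
  have hnum' : a ^ 2 * 3 - 1 ≠ 0 := by rwa [mul_comm]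
  field_simp
  ring
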